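/- Let a < b be real numbers. Define β(z) = exp((1/4) Log((z − b)/(z − a))) for z ∈ ℂ \ [a, b], where Log is the principal branch of the logarithm (note (z−b)/(z−a) ∈ ℂ \ (−∞, 0] for z ∈ ℂ \ [a, b]), and define the 2×2 matrix S(z) with entries S₁₁(z) = S₂₂(z) = (β(z) + β(z)⁻¹)/2, S₁₂(z) = (β(z) − β(z)⁻¹)/(2i), S₂₁(z) = −(β(z) − β(z)⁻¹)/(2i). Then: (i) S is holomorphic on ℂ \ [a, b]; (ii) for every x ∈ (a, b) the limits S₊(x) = lim_{ε→0+} S(x + iε) and S₋(x) = lim_{ε→0+} S(x − iε) exist and S₊(x) = S₋(x) · [[0, 1], [−1, 0]]; (iii) S(z) → I (the identity matrix) as |z| → ∞. -/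

import Mathlib

open Filter Topology

noncomputable section

/-- `β(z) = ((z−b)/(z−a))^{1/4}` via the principal branch of the logarithm. -/
def betaFn (a b : ℝ) (z : ℂ) : ℂ :=
  Complex.exp ((1 / 4 : ℂ) * Complex.log ((z - (b : ℂ)) / (z - (a : ℂ))))

/-- The outside parametrix `S^∞(z)` built from `β`. -/
def Sout (a b : ℝ) (z : ℂ) : Matrix (Fin 2) (Fin 2) ℂ :=
  !![(betaFn a b z + (betaFn a b z)⁻¹) / 2, (betaFn a b z - (betaFn a b z)⁻¹) / (2 * Complex.I);
     -((betaFn a b z - (betaFn a b z)⁻¹) / (2 * Complex.I)),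
     (betaFn a b z + (betaFn a b z)⁻¹) / 2]

/-- A matrix-valued tendsto helper. -/
lemma SoutAux_tendsto {α : Type*} {l : Filter α} {f : α → ℂ} {c : ℂ} (hc : c ≠ 0)
    (hf : Tendsto f l (𝓝 c)) :
    Tendsto (fun t => (!![(f t + (f t)⁻¹) / 2, (f t - (f t)⁻¹) / (2 * Complex.I);
       -((f t - (f t)⁻¹) / (2 * Complex.I)),
       (f t + (f t)⁻¹) / 2] : Matrix (Fin 2) (Fin 2) ℂ)) l
      (𝓝 !![(c + c⁻¹) / 2, (c - c⁻¹) / (2 * Complex.I);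
       -((c - c⁻¹) / (2 * Complex.I)), (c + c⁻¹) / 2]) := by
  have h1 : Tendsto (fun t => (f t + (f t)⁻¹) / 2) l (𝓝 ((c + c⁻¹) / 2)) :=
    (hf.add (hf.inv₀ hc)).div_const 2
  have h2 : Tendsto (fun t => (f t - (f t)⁻¹) / (2 * Complex.I)) l
      (𝓝 ((c - c⁻¹) / (2 * Complex.I))) :=
    (hf.sub (hf.inv₀ hc)).div_const (2 * Complex.I)
  refine tendsto_pi_nhds.2 fun i => tendsto_pi_nhds.2 fun j => ?_
  fin_cases i <;> fin_cases j <;> simp only [Matrix.cons_val', Matrix.cons_val_zero,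
    Matrix.cons_val_one, Matrix.head_cons, Matrix.empty_val', Matrix.cons_val_fin_one,
    Matrix.head_fin_const]
  · exact h1
  · exact h2
  · exact h2.neg
  · exact h1

lemma slit_of_not_mem (a b : ℝ) (hab : a < b) {z : ℂ}
    (hz : z ∉ ((fun x : ℝ => (x : ℂ)) '' Set.Icc a b)) :
    ((z - (b : ℂ)) / (z - (a : ℂ))) ∈ Complex.slitPlane := by
  have hza : z - (a : ℂ) ≠ 0 := by
    intro h
    exact hz ⟨a, ⟨le_refl a, hab.le⟩, (sub_eq_zero.1 h).symm⟩
  have hN : 0 < Complex.normSq (z - (a : ℂ)) := Complex.normSq_pos.2 hza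
  rw [Complex.mem_slitPlane_iff]
  by_cases him : z.im = 0
  · left
    have hz' : z.re ∉ Set.Icc a b := by
      intro h
      exact hz ⟨z.re, h, by exact (Complex.ext rfl him.symm)⟩
    have hcase : z.re < a ∨ b < z.re := by
      by_contra hc
      push_neg at hc
      exact hz' ⟨hc.1, hc.2⟩
    have hre : ((z - (b : ℂ)) / (z - (a : ℂ))).re
        = (z.re - b) * (z.re - a) / Complex.normSq (z - (a : ℂ)) := by
      rw [Complex.div_re]
      simp [him]
    rw [hre]
    apply div_pos _ hN
    rcases hcase with h | h <;> nlinarith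
  · right
    have him' : ((z - (b : ℂ)) / (z - (a : ℂ))).im
        = z.im * (b - a) / Complex.normSq (z - (a : ℂ)) := by
      rw [Complex.div_im]
      rw [div_sub_div_same]
      congr 1
      simp
      ring
    rw [him']
    exact div_ne_zero (mul_ne_zero him (sub_ne_zero.2 hab.ne')) hN.ne'

/-- the outside parametrix `S` is holomorphic on `ℂ \\ [a,b]`, has boundary
values on `(a,b)` satisfying the jump `S₊ = S₋ [[0,1],[−1,0]]`, and tends to the identity
matrix at infinity. -/
theorem Sout_RH_problem (a b : ℝ) (hab : a < b) :
    (∀ i j : Fin 2, DifferentiableOn ℂ (fun z => Sout a b z i j)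
        (((fun x : ℝ => (x : ℂ)) '' Set.Icc a b)ᶜ)) ∧
    (∀ x ∈ Set.Ioo a b, ∃ Sp Sm : Matrix (Fin 2) (Fin 2) ℂ,
      Tendsto (fun ε : ℝ => Sout a b ((x : ℂ) + ε * Complex.I)) (𝓝[>] 0) (𝓝 Sp) ∧
      Tendsto (fun ε : ℝ => Sout a b ((x : ℂ) - ε * Complex.I)) (𝓝[>] 0) (𝓝 Sm) ∧
      Sp = Sm * !![0, 1; -1, 0]) ∧
    Tendsto (fun z : ℂ => Sout a b z) (cocompact ℂ) (𝓝 (1 : Matrix (Fin 2) (Fin 2) ℂ)) := by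
  set K := ((fun x : ℝ => (x : ℂ)) '' Set.Icc a b) with hK
  have hβdiff : ∀ z ∈ Kᶜ, DifferentiableAt ℂ (betaFn a b) z := by
    intro z hz
    have hza : z - (a : ℂ) ≠ 0 := by
      intro h
      exact hz ⟨a, ⟨le_refl a, hab.le⟩, (sub_eq_zero.1 h).symm⟩
    have hq : DifferentiableAt ℂ (fun z : ℂ => (z - (b : ℂ)) / (z - (a : ℂ))) z :=
      ((differentiableAt_id.sub (differentiableAt_const _)).div
        (differentiableAt_id.sub (differentiableAt_const _)) hza)
    have hslit := slit_of_not_mem a b hab hz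
    exact ((hq.clog (by simpa using hslit)).const_mul _).cexp
  have hβ : DifferentiableOn ℂ (betaFn a b) Kᶜ :=
    fun z hz => (hβdiff z hz).differentiableWithinAt
  have hβne : ∀ z, betaFn a b z ≠ 0 := fun z => Complex.exp_ne_zero _
  have hβinv : DifferentiableOn ℂ (fun z => (betaFn a b z)⁻¹) Kᶜ :=
    hβ.inv (fun z _ => hβne z)
  refine ⟨?_, ?_, ?_⟩
  · intro i j
    fin_cases i <;> fin_cases j <;>
      simp only [Sout, Matrix.cons_val', Matrix.cons_val_zero, Matrix.cons_val_one,
        Matrix.head_cons, Matrix.empty_val', Matrix.cons_val_fin_one, Matrix.head_fin_const]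
    · exact (hβ.add hβinv).div_const 2
    · exact (hβ.sub hβinv).div_const (2 * Complex.I)
    · exact ((hβ.sub hβinv).div_const (2 * Complex.I)).neg
    · exact (hβ.add hβinv).div_const 2
  · -- boundary values
    intro x hx
    obtain ⟨hax, hxb⟩ := hx
    have hxa : (x : ℂ) - (a : ℂ) ≠ 0 := by
      intro h
      have : x = a := by exact_mod_cast sub_eq_zero.1 h
      linarith
    have hw0eq : ((x : ℂ) - (b : ℂ)) / ((x : ℂ) - (a : ℂ))
        = (((x - b) / (x - a) : ℝ) : ℂ) := by push_cast; ring
    set w0 : ℂ := ((x : ℂ) - (b : ℂ)) / ((x : ℂ) - (a : ℂ)) with hw0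
    have hw0re : w0.re < 0 := by
      rw [hw0eq, Complex.ofReal_re]
      apply div_neg_of_neg_of_pos <;> linarith
    have hw0im : w0.im = 0 := by rw [hw0eq, Complex.ofReal_im]
    set Lp : ℂ := Real.log ‖w0‖ + Real.pi * Complex.I with hLp
    set Lm : ℂ := Real.log ‖w0‖ - Real.pi * Complex.I with hLm
    set βp : ℂ := Complex.exp ((1 / 4 : ℂ) * Lp) with hβp
    set βm : ℂ := Complex.exp ((1 / 4 : ℂ) * Lm) with hβm
    -- convergence of the argument from above
    have hupn : Tendsto (fun ε : ℝ => (((x : ℂ) + ε * Complex.I - (b : ℂ)) /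
        ((x : ℂ) + ε * Complex.I - (a : ℂ)))) (𝓝 (0:ℝ)) (𝓝 w0) := by
      have h0 : Tendsto (fun ε : ℝ => (x : ℂ) + (ε : ℂ) * Complex.I) (𝓝 0) (𝓝 (x : ℂ)) := by
        have h1 : Tendsto (fun ε : ℝ => ((ε : ℝ) : ℂ)) (𝓝 0) (𝓝 0) := by
          simpa using (Complex.continuous_ofReal.tendsto (0:ℝ))
        simpa using (tendsto_const_nhds (x := (x:ℂ)) (f := 𝓝 (0:ℝ))).add
          (h1.mul_const Complex.I)
      exact (h0.sub tendsto_const_nhds).div (h0.sub tendsto_const_nhds) hxa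
    have hlon : Tendsto (fun ε : ℝ => (((x : ℂ) - ε * Complex.I - (b : ℂ)) /
        ((x : ℂ) - ε * Complex.I - (a : ℂ)))) (𝓝 (0:ℝ)) (𝓝 w0) := by
      have h0 : Tendsto (fun ε : ℝ => (x : ℂ) - (ε : ℂ) * Complex.I) (𝓝 0) (𝓝 (x : ℂ)) := by
        have h1 : Tendsto (fun ε : ℝ => ((ε : ℝ) : ℂ)) (𝓝 0) (𝓝 0) := by
          simpa using (Complex.continuous_ofReal.tendsto (0:ℝ))
        simpa using (tendsto_const_nhds (x := (x:ℂ)) (f := 𝓝 (0:ℝ))).sub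
          (h1.mul_const Complex.I)
      exact (h0.sub tendsto_const_nhds).div (h0.sub tendsto_const_nhds) hxa
    -- imaginary parts
    have himp : ∀ ε : ℝ, 0 < ε → 0 < (((x : ℂ) + ε * Complex.I - (b : ℂ)) /
        ((x : ℂ) + ε * Complex.I - (a : ℂ))).im := by
      intro ε hε
      have hden : (x : ℂ) + ε * Complex.I - (a : ℂ) ≠ 0 := by
        intro h
        have := congrArg Complex.im h
        simp at this
        exact hε.ne' this
      have hNp : 0 < Complex.normSq ((x : ℂ) + ε * Complex.I - (a : ℂ)) :=
        Complex.normSq_pos.2 hden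
      have : (((x : ℂ) + ε * Complex.I - (b : ℂ)) /
          ((x : ℂ) + ε * Complex.I - (a : ℂ))).im
          = ε * (b - a) / Complex.normSq ((x : ℂ) + ε * Complex.I - (a : ℂ)) := by
        rw [Complex.div_im, div_sub_div_same]
        congr 1
        simp
        ring
      rw [this]
      apply div_pos _ hNp
      nlinarith
    have himm : ∀ ε : ℝ, 0 < ε → (((x : ℂ) - ε * Complex.I - (b : ℂ)) /
        ((x : ℂ) - ε * Complex.I - (a : ℂ))).im < 0 := by
      intro ε hε
      have hden : (x : ℂ) - ε * Complex.I - (a : ℂ) ≠ 0 := by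
        intro h
        have := congrArg Complex.im h
        simp at this
        exact hε.ne' this
      have hNp : 0 < Complex.normSq ((x : ℂ) - ε * Complex.I - (a : ℂ)) :=
        Complex.normSq_pos.2 hden
      have : (((x : ℂ) - ε * Complex.I - (b : ℂ)) /
          ((x : ℂ) - ε * Complex.I - (a : ℂ))).im
          = -(ε * (b - a)) / Complex.normSq ((x : ℂ) - ε * Complex.I - (a : ℂ)) := by
        rw [Complex.div_im, div_sub_div_same]
        congr 1
        simp
        ring
      rw [this]
      apply div_neg_of_neg_of_pos _ hNp
      nlinarith
    have hβptend : Tendsto (fun ε : ℝ => betaFn a b ((x : ℂ) + ε * Complex.I)) (𝓝[>] 0)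
        (𝓝 βp) := by
      have hup : Tendsto (fun ε : ℝ => (((x : ℂ) + ε * Complex.I - (b : ℂ)) /
          ((x : ℂ) + ε * Complex.I - (a : ℂ)))) (𝓝[>] 0)
          (𝓝[{ z : ℂ | 0 ≤ z.im }] w0) := by
        rw [tendsto_nhdsWithin_iff]
        refine ⟨hupn.mono_left nhdsWithin_le_nhds, ?_⟩
        filter_upwards [self_mem_nhdsWithin] with ε (hε : 0 < ε)
        exact (himp ε hε).le
      have hlog := (Complex.tendsto_log_nhdsWithin_im_nonneg_of_re_neg_of_im_zero hw0re
        hw0im).comp hup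
      have h := ((tendsto_const_nhds (x := (1/4 : ℂ))).mul hlog).cexp
      rw [hβp, hLp]
      simpa only [betaFn, Function.comp_def] using h
    have hβmtend : Tendsto (fun ε : ℝ => betaFn a b ((x : ℂ) - ε * Complex.I)) (𝓝[>] 0)
        (𝓝 βm) := by
      have hlo : Tendsto (fun ε : ℝ => (((x : ℂ) - ε * Complex.I - (b : ℂ)) /
          ((x : ℂ) - ε * Complex.I - (a : ℂ)))) (𝓝[>] 0)
          (𝓝[{ z : ℂ | z.im < 0 }] w0) := by
        rw [tendsto_nhdsWithin_iff]
        refine ⟨hlon.mono_left nhdsWithin_le_nhds, ?_⟩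
        filter_upwards [self_mem_nhdsWithin] with ε (hε : 0 < ε)
        exact himm ε hε
      have hlog := (Complex.tendsto_log_nhdsWithin_im_neg_of_re_neg_of_im_zero hw0re
        hw0im).comp hlo
      have h := ((tendsto_const_nhds (x := (1/4 : ℂ))).mul hlog).cexp
      rw [hβm, hLm]
      simpa only [betaFn, Function.comp_def] using h
    have hβpne : βp ≠ 0 := Complex.exp_ne_zero _
    have hβmne : βm ≠ 0 := Complex.exp_ne_zero _
    have hexpI : Complex.exp ((Real.pi / 2 : ℝ) * Complex.I) = Complex.I := by
      rw [Complex.exp_mul_I]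
      simp [← Complex.ofReal_cos, ← Complex.ofReal_sin, Real.cos_pi_div_two,
        Real.sin_pi_div_two]
    have hrel : βp = Complex.I * βm := by
      have harg : (1 / 4 : ℂ) * Lp = ((Real.pi / 2 : ℝ) : ℂ) * Complex.I
          + (1 / 4 : ℂ) * Lm := by
        rw [hLp, hLm]; push_cast; ring
      rw [hβp, harg, Complex.exp_add, hexpI, hβm]
    have hinv : βp⁻¹ = -(Complex.I * βm⁻¹) := by
      rw [hrel, mul_inv, Complex.inv_I]; ring
    have key : ∀ u : ℂ, u / (2 * Complex.I) = -(u * Complex.I) / 2 := by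
      intro u
      rw [mul_comm (2:ℂ), ← div_div, Complex.div_I]
    have hA : (βp + βp⁻¹) / 2 = -((βm - βm⁻¹) / (2 * Complex.I)) := by
      rw [hinv, hrel, key]
      ring
    have hB : (βp - βp⁻¹) / (2 * Complex.I) = (βm + βm⁻¹) / 2 := by
      rw [hinv, hrel, key]
      linear_combination (-(βm + βm⁻¹) / 2) * Complex.I_sq
    refine ⟨!![(βp + βp⁻¹) / 2, (βp - βp⁻¹) / (2 * Complex.I);
       -((βp - βp⁻¹) / (2 * Complex.I)), (βp + βp⁻¹) / 2],
      !![(βm + βm⁻¹) / 2, (βm - βm⁻¹) / (2 * Complex.I);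
       -((βm - βm⁻¹) / (2 * Complex.I)), (βm + βm⁻¹) / 2], ?_, ?_, ?_⟩
    · simpa only [Sout] using SoutAux_tendsto hβpne hβptend
    · simpa only [Sout] using SoutAux_tendsto hβmne hβmtend
    · ext i j
      fin_cases i <;> fin_cases j <;> simp [Matrix.mul_apply, Fin.sum_univ_two]
      all_goals first
        | linear_combination hA | linear_combination -hA | linear_combination 2 * hA
        | linear_combination -2 * hA | linear_combination hB | linear_combination -hB
        | linear_combination 2 * hB | linear_combination -2 * hB
  · -- limit at infinity
    have hsub : Tendsto (fun z : ℂ => z - (a : ℂ)) (cocompact ℂ) (cocompact ℂ) := by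
      have h2 : Tendsto (⇑(Homeomorph.subRight ((a : ℝ) : ℂ))) (cocompact ℂ) (cocompact ℂ) := by
        nth_rewrite 2 [← (Homeomorph.subRight ((a : ℝ) : ℂ)).map_cocompact]
        exact tendsto_map
      simpa using h2
    have hinv : Tendsto (fun z : ℂ => (z - (a : ℂ))⁻¹) (cocompact ℂ) (𝓝 0) := by
      have h : Tendsto (Inv.inv : ℂ → ℂ) (cocompact ℂ) (𝓝 0) := by
        rw [← Metric.cobounded_eq_cocompact]
        exact Filter.tendsto_inv₀_cobounded
      exact h.comp hsub
    have hw : Tendsto (fun z : ℂ => (z - (b : ℂ)) / (z - (a : ℂ))) (cocompact ℂ) (𝓝 1) := by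
      have h1 : Tendsto (fun z : ℂ => 1 + ((a : ℂ) - b) * (z - (a : ℂ))⁻¹) (cocompact ℂ)
          (𝓝 1) := by
        have h := (tendsto_const_nhds (x := (1:ℂ)) (f := cocompact ℂ)).add
          (((tendsto_const_nhds (x := ((a:ℂ) - b))).mul hinv))
        simpa using h
      apply h1.congr'
      have hne : ∀ᶠ z : ℂ in cocompact ℂ, z ≠ (a : ℂ) :=
        (Filter.eventually_cofinite_ne ((a : ℝ) : ℂ)).filter_mono Filter.cocompact_le_cofinite
      filter_upwards [hne] with z hz
      have hza : z - (a : ℂ) ≠ 0 := sub_ne_zero.2 hz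
      field_simp
      ring
    have hlog : Tendsto (fun z : ℂ => Complex.log ((z - (b : ℂ)) / (z - (a : ℂ))))
        (cocompact ℂ) (𝓝 0) := by
      have h := hw.clog (by simp [Complex.slitPlane])
      simpa using h
    have hβ1 : Tendsto (fun z : ℂ => betaFn a b z) (cocompact ℂ) (𝓝 1) := by
      have h := ((tendsto_const_nhds (x := (1/4 : ℂ))).mul hlog).cexp
      simpa [betaFn] using h
    have h := SoutAux_tendsto (one_ne_zero) hβ1
    simp only [Sout]
    have hlim : (!![((1:ℂ) + 1⁻¹) / 2, ((1:ℂ) - 1⁻¹) / (2 * Complex.I);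
        -(((1:ℂ) - 1⁻¹) / (2 * Complex.I)), ((1:ℂ) + 1⁻¹) / 2] : Matrix (Fin 2) (Fin 2) ℂ)
        = 1 := by
      rw [Matrix.one_fin_two]
      norm_num
    rw [← hlim]
    exact h
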